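/- There exists a bounded linear functional F : l∞ → ℝ such that ‖F‖ = 1, F restricted to st equals the statistical limit functional g, F(s) ≥ 0 whenever s_n ≥ 0 for almost all n, and F(x) = F(Tx) for every map T : l∞ → l∞ satisfying (Tx)_k = x_{k+1} for almost all k. -/

import Mathlib

open Filter

open scoped Classical in
/-- The sequence of partial densities of `P ⊆ ℕ`. -/
noncomputable def densSeq (P : Set ℕ) (n : ℕ) : ℝ :=
  (((Finset.range n).filter (fun k => k ∈ P)).card : ℝ) / n

/-- `P` has natural density `d`. -/
def HasDensity (P : Set ℕ) (d : ℝ) : Prop :=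
  Tendsto (densSeq P) atTop (nhds d)

/-- Statistical convergence of a real sequence to `l`. -/
def StatTendsto (x : ℕ → ℝ) (l : ℝ) : Prop :=
  ∀ ε : ℝ, 0 < ε → HasDensity {n | |x n - l| > ε} 0

/-- The space `l∞` of bounded real sequences with sup norm. -/
noncomputable abbrev Linf := lp (fun _ : ℕ => ℝ) ⊤

/-- `F` is a Banach statistical limit functional on `l∞`. -/
def IsBSL (F : Linf →L[ℝ] ℝ) : Prop :=
  ‖F‖ = 1 ∧
  (∀ (x : Linf) (l : ℝ), StatTendsto (fun n => x n) l → F x = l) ∧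
  (∀ s : Linf, HasDensity {n | ¬ 0 ≤ s n} 0 → 0 ≤ F s) ∧
  (∀ T : Linf → Linf,
    (∀ x : Linf, HasDensity {k | T x k ≠ x (k + 1)} 0) → ∀ x : Linf, F x = F (T x))

/-! ### Auxiliary Cesàro-mean machinery -/

/-- The Cesàro means of a sequence. -/
noncomputable def cesaro (x : ℕ → ℝ) (n : ℕ) : ℝ := (∑ k ∈ Finset.range n, x k) / n

lemma cesaro_add (u v : ℕ → ℝ) :
    cesaro (fun k => u k + v k) = cesaro u + cesaro v := by
  funext n
  simp [cesaro, Finset.sum_add_distrib, add_div]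

lemma cesaro_neg (u : ℕ → ℝ) : cesaro (fun k => -u k) = fun n => -cesaro u n := by
  funext n
  simp [cesaro, neg_div]

lemma cesaro_mono {u v : ℕ → ℝ} (h : ∀ k, u k ≤ v k) (n : ℕ) : cesaro u n ≤ cesaro v n := by
  unfold cesaro
  gcongr with k hk
  exact h k

lemma abs_cesaro_le {x : ℕ → ℝ} {M : ℝ} (hM : 0 ≤ M) (hb : ∀ k, |x k| ≤ M) (n : ℕ) :
    |cesaro x n| ≤ M := by
  rcases Nat.eq_zero_or_pos n with h | h
  · simp [cesaro, h, hM]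
  · have h1 : |∑ k ∈ Finset.range n, x k| ≤ ∑ k ∈ Finset.range n, M :=
      (Finset.abs_sum_le_sum_abs _ _).trans (Finset.sum_le_sum fun k _ => hb k)
    rw [Finset.sum_const, Finset.card_range, nsmul_eq_mul] at h1
    rw [cesaro, abs_div, abs_of_nonneg (by positivity : (0:ℝ) ≤ (n:ℝ))]
    rw [div_le_iff₀ (by exact_mod_cast h)]
    linarith [mul_comm M (n:ℝ)]

lemma densSeq_nonneg (P : Set ℕ) (n : ℕ) : 0 ≤ densSeq P n := by
  unfold densSeq; positivity

lemma hasDensity_zero_mono {P Q : Set ℕ} (hQP : Q ⊆ P) (h : HasDensity P 0) :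
    HasDensity Q 0 := by
  classical
  refine squeeze_zero (densSeq_nonneg Q) (fun n => ?_) h
  unfold densSeq
  gcongr

lemma tendsto_cesaro_zero {y : ℕ → ℝ} {M : ℝ} (hM : 0 < M) (hb : ∀ k, |y k| ≤ M)
    (h : ∀ ε : ℝ, 0 < ε → HasDensity {k | |y k| > ε} 0) :
    Tendsto (cesaro y) atTop (nhds 0) := by
  classical
  rw [NormedAddCommGroup.tendsto_nhds_zero]
  intro ε hε
  set E := {k | |y k| > ε/2} with hE
  have hd : Tendsto (fun n => M * densSeq E n) atTop (nhds 0) := by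
    simpa using (h (ε/2) (by positivity)).const_mul M
  have h3 : ∀ᶠ n in atTop, M * densSeq E n < ε/2 := hd.eventually_lt_const (by positivity)
  filter_upwards [h3, eventually_ge_atTop 1] with n hn hn1
  have hnpos : (0:ℝ) < n := by exact_mod_cast hn1
  have hcard : ∑ k ∈ Finset.range n, |y k|
      ≤ M * ((Finset.range n).filter (fun k => k ∈ E)).card + (ε/2) * n := by
    rw [← Finset.sum_filter_add_sum_filter_not (Finset.range n) (fun k => k ∈ E)]
    refine add_le_add ?_ ?_
    · calc ∑ k ∈ (Finset.range n).filter (fun k => k ∈ E), |y k|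
          ≤ ∑ _k ∈ (Finset.range n).filter (fun k => k ∈ E), M :=
            Finset.sum_le_sum fun k _ => hb k
        _ = M * _ := by rw [Finset.sum_const, nsmul_eq_mul, mul_comm]
    · calc ∑ k ∈ (Finset.range n).filter (fun k => ¬ k ∈ E), |y k|
          ≤ ∑ _k ∈ (Finset.range n).filter (fun k => ¬ k ∈ E), (ε/2) := by
            refine Finset.sum_le_sum fun k hk => ?_
            have := (Finset.mem_filter.1 hk).2
            simpa [hE, not_lt] using this
        _ ≤ (ε/2) * n := by
            rw [Finset.sum_const, nsmul_eq_mul, mul_comm]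
            have hc : ((((Finset.range n).filter (fun k => ¬ k ∈ E)).card : ℝ)) ≤ (n:ℝ) := by
              exact_mod_cast (Finset.card_filter_le _ _).trans (Finset.card_range n).le
            exact mul_le_mul_of_nonneg_left hc (by positivity)
  have hds : densSeq E n = (((Finset.range n).filter (fun k => k ∈ E)).card : ℝ) / n := by
    unfold densSeq; rfl
  have habs : ‖cesaro y n‖ ≤ M * densSeq E n + ε/2 := by
    rw [Real.norm_eq_abs, cesaro, abs_div, abs_of_nonneg hnpos.le]
    rw [div_le_iff₀ hnpos]
    have h4 : |∑ k ∈ Finset.range n, y k| ≤ ∑ k ∈ Finset.range n, |y k| :=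
      Finset.abs_sum_le_sum_abs _ _
    have h5 : (M * densSeq E n + ε/2) * n
        = M * ((Finset.range n).filter (fun k => k ∈ E)).card + (ε/2) * n := by
      rw [hds]; field_simp
    rw [h5]
    exact h4.trans hcard
  calc ‖cesaro y n‖ ≤ M * densSeq E n + ε/2 := habs
    _ < ε/2 + ε/2 := by linarith
    _ = ε := by ring

section HahnBanach
set_option synthInstance.maxHeartbeats 1000000
set_option maxHeartbeats 1000000

lemma linf_apply_abs_le_norm (x : Linf) (k : ℕ) : |x k| ≤ ‖x‖ := by
  simpa [Real.norm_eq_abs] using lp.norm_apply_le_norm ENNReal.top_ne_zero x k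

lemma abs_cesaro_coe_le (x : Linf) (n : ℕ) : |cesaro (⇑x) n| ≤ ‖x‖ :=
  abs_cesaro_le (norm_nonneg x) (linf_apply_abs_le_norm x) n

lemma isB {u : ℕ → ℝ} {M : ℝ} (h : ∀ n, |u n| ≤ M) :
    IsBoundedUnder (· ≤ ·) (atTop : Filter ℕ) u :=
  ⟨M, eventually_map.2 (Eventually.of_forall fun n => (abs_le.1 (h n)).2)⟩

lemma isBge {u : ℕ → ℝ} {M : ℝ} (h : ∀ n, |u n| ≤ M) :
    IsBoundedUnder (· ≥ ·) (atTop : Filter ℕ) u :=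
  ⟨-M, eventually_map.2 (Eventually.of_forall fun n => (abs_le.1 (h n)).1)⟩

lemma isC {u : ℕ → ℝ} {M : ℝ} (h : ∀ n, |u n| ≤ M) :
    IsCoboundedUnder (· ≤ ·) (atTop : Filter ℕ) u :=
  (isBge h).isCoboundedUnder_le

/-- The sublinear functional: `limsup` of Cesàro means. -/
noncomputable def NN (x : Linf) : ℝ := limsup (cesaro ⇑x) atTop

lemma coe_smul' (c : ℝ) (x : Linf) : ⇑(c • x) = fun k => c * x k := by
  funext k; simp

lemma NN_smul (c : ℝ) (hc : 0 < c) (x : Linf) : NN (c • x) = c * NN x := by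
  have h1 : cesaro ⇑(c • x) = fun n => c * cesaro (⇑x) n := by
    funext n
    rw [coe_smul' c x]
    simp [cesaro, ← Finset.mul_sum, mul_div_assoc]
  have h2 := (OrderIso.mulLeft₀ c hc).limsup_apply (u := cesaro ⇑x) (f := atTop)
    (isB (abs_cesaro_coe_le x)) (isC (abs_cesaro_coe_le x))
    (isB (M := c * ‖x‖) ?_) (isC (M := c * ‖x‖) ?_)
  · rw [NN, NN, h1]
    rw [show ⇑(OrderIso.mulLeft₀ c hc) = fun t => c * t from rfl] at h2
    exact h2.symm ▸ rfl
  all_goals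
    intro n
    rw [show (OrderIso.mulLeft₀ c hc) (cesaro (⇑x) n) = c * cesaro (⇑x) n from rfl]
    rw [abs_mul, abs_of_pos hc]
    exact mul_le_mul_of_nonneg_left (abs_cesaro_coe_le x n) hc.le

lemma NN_add (x y : Linf) : NN (x + y) ≤ NN x + NN y := by
  have h1 : cesaro ⇑(x + y) = cesaro ⇑x + cesaro ⇑y := by
    rw [show ⇑(x + y) = fun k => x k + y k from funext fun k => by simp]
    exact cesaro_add _ _
  rw [NN, h1]
  exact limsup_add_le (isBge (abs_cesaro_coe_le x)) (isB (abs_cesaro_coe_le x))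
    (isC (abs_cesaro_coe_le y)) (isB (abs_cesaro_coe_le y))

lemma NN_le_norm (x : Linf) : NN x ≤ ‖x‖ :=
  limsup_le_of_le (isC (abs_cesaro_coe_le x))
    (Eventually.of_forall fun n => (abs_le.1 (abs_cesaro_coe_le x n)).2)

lemma NN_zero : NN 0 = 0 := by
  have h : cesaro ⇑(0 : Linf) = fun _ => (0:ℝ) := by
    funext n; simp [cesaro]
  rw [NN, h]
  exact tendsto_const_nhds.limsup_eq

lemma exists_g : ∃ g : Linf →ₗ[ℝ] ℝ, ∀ x, g x ≤ NN x := by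
  have hf : ∀ x : ((0 : Linf →ₗ[ℝ] ℝ).toPMap ⊥).domain,
      ((0 : Linf →ₗ[ℝ] ℝ).toPMap ⊥) x ≤ NN x := by
    rintro ⟨x, hx⟩
    have hx0 : x = 0 := (Submodule.mem_bot ℝ).1 hx
    subst hx0
    simp [LinearMap.toPMap, NN_zero]
  obtain ⟨g, -, hg⟩ := exists_extension_of_le_sublinear
    ((0 : Linf →ₗ[ℝ] ℝ).toPMap ⊥) NN (fun c hc x => NN_smul c hc x) NN_add hf
  exact ⟨g, hg⟩

theorem exists_banach_statistical_limit :
    ∃ F : Linf →L[ℝ] ℝ,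
      ‖F‖ = 1 ∧
      (∀ (x : Linf) (l : ℝ), StatTendsto (fun n => x n) l → F x = l) ∧
      (∀ s : Linf, HasDensity {n | ¬ 0 ≤ s n} 0 → 0 ≤ F s) ∧
      (∀ T : Linf → Linf,
        (∀ x : Linf, HasDensity {k | T x k ≠ x (k + 1)} 0) →
          ∀ x : Linf, F x = F (T x)) := by
  classical
  obtain ⟨g, hg⟩ := exists_g
  have habs : ∀ x : Linf, |g x| ≤ ‖x‖ := by
    intro x
    refine abs_le.2 ⟨?_, (hg x).trans (NN_le_norm x)⟩
    have h2 := (hg (-x)).trans (NN_le_norm (-x))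
    rw [map_neg, norm_neg] at h2
    linarith
  set F : Linf →L[ℝ] ℝ := LinearMap.mkContinuous g 1
    (fun x => by simpa [Real.norm_eq_abs] using habs x) with hF
  have hFx : ∀ x, F x = g x := fun x => rfl
  have key : ∀ (x : Linf) (l : ℝ), Tendsto (cesaro ⇑x) atTop (nhds l) → g x = l := by
    intro x l h
    have h1 : g x ≤ l := (hg x).trans_eq h.limsup_eq
    have hneg : cesaro ⇑(-x) = fun n => -cesaro (⇑x) n := by
      rw [show ⇑(-x) = fun k => -(x k) from funext fun k => by simp]
      exact cesaro_neg _
    have h2 : g (-x) ≤ -l := by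
      refine (hg (-x)).trans_eq ?_
      rw [NN, hneg]
      exact h.neg.limsup_eq
    rw [map_neg] at h2
    linarith
  have hone : Tendsto (cesaro ⇑(1 : Linf)) atTop (nhds 1) := by
    rw [show ⇑(1 : Linf) = fun _ => (1:ℝ) from lp.infty_coeFn_one]
    refine Tendsto.congr' ?_ tendsto_const_nhds
    filter_upwards [eventually_ge_atTop 1] with n hn
    have hn0 : (n:ℝ) ≠ 0 := by
      have : (0:ℝ) < n := by exact_mod_cast hn
      exact this.ne'
    simp [cesaro, hn0]
  have g1 : g 1 = 1 := key 1 1 hone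
  refine ⟨F, ?_, ?_, ?_, ?_⟩
  · -- norm
    refine le_antisymm (hF ▸ LinearMap.mkContinuous_norm_le g zero_le_one _) ?_
    calc (1:ℝ) = ‖F 1‖ := by rw [hFx, g1]; simp
      _ ≤ ‖F‖ * ‖(1:Linf)‖ := F.le_opNorm 1
      _ = ‖F‖ := by rw [norm_one, mul_one]
  · -- statistical limits
    intro x l hst
    set y : Linf := x - l • 1 with hy
    have hyk : ∀ k, y k = x k - l := by
      intro k
      have h1 : ((1:Linf) : ℕ → ℝ) k = 1 := congrFun lp.infty_coeFn_one k
      rw [hy]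
      simp only [lp.coeFn_sub, lp.coeFn_smul, Pi.sub_apply, Pi.smul_apply, h1, smul_eq_mul, mul_one]
    have hy0 : g y = 0 := by
      apply key y 0
      have hc : (⇑y : ℕ → ℝ) = fun k => x k - l := funext hyk
      rw [hc]
      refine tendsto_cesaro_zero (M := ‖y‖ + 1) (by positivity) ?_ ?_
      · intro k
        rw [← hyk k]
        exact (linf_apply_abs_le_norm y k).trans (by linarith)
      · intro ε hε
        exact hst ε hε
    have hgx : g x = g y + l * g 1 := by
      rw [hy, map_sub, map_smul, smul_eq_mul]; ring
    rw [hFx, hgx, hy0, g1]; ring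
  · -- positivity
    intro s hs
    set z : ℕ → ℝ := fun k => min (s k) 0 with hz
    have hzb : ∀ k, |(fun k => -z k) k| ≤ ‖s‖ + 1 := by
      intro k
      simp only [abs_neg]
      have hsk := linf_apply_abs_le_norm s k
      rcases le_or_gt (s k) 0 with h | h
      · rw [hz]
        simp only [min_eq_left h]
        linarith
      · rw [hz]
        simp only [min_eq_right h.le, abs_zero]
        positivity
    have hzt : Tendsto (cesaro (fun k => -z k)) atTop (nhds 0) := by
      refine tendsto_cesaro_zero (M := ‖s‖ + 1) (by positivity) hzb ?_
      intro ε hε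
      refine hasDensity_zero_mono ?_ hs
      intro k hk
      simp only [Set.mem_setOf_eq] at hk ⊢
      intro hsk
      rw [hz] at hk
      simp only [min_eq_right hsk, neg_zero, abs_zero] at hk
      linarith
    have hmono : ∀ n, cesaro ⇑(-s) n ≤ cesaro (fun k => -z k) n := by
      intro n
      refine cesaro_mono (fun k => ?_) n
      have hco : ⇑(-s) k = -(s k) := by simp
      rw [hco]
      exact neg_le_neg (min_le_left _ _)
    have hzbc : ∀ n, |cesaro (fun k => -z k) n| ≤ ‖s‖ + 1 :=
      abs_cesaro_le (by positivity) hzb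
    have hls : NN (-s) ≤ 0 := by
      calc NN (-s) ≤ limsup (cesaro (fun k => -z k)) atTop :=
            limsup_le_limsup (Eventually.of_forall hmono)
              (isC (abs_cesaro_coe_le (-s))) (isB hzbc)
        _ = 0 := hzt.limsup_eq
    have hgs := (hg (-s)).trans hls
    rw [map_neg] at hgs
    rw [hFx]
    linarith
  · -- shift invariance
    intro T hT x
    have h1 : Tendsto (cesaro (fun k => x k - x (k+1))) atTop (nhds 0) := by
      have heq : ∀ n, cesaro (fun k => x k - x (k+1)) n = (x 0 - x n) / (n:ℝ) := by
        intro n; rw [cesaro, Finset.sum_range_sub']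
      have hb : ∀ n, ‖cesaro (fun k => x k - x (k+1)) n‖ ≤ (2 * ‖x‖) / (n:ℝ) := by
        intro n
        rw [heq n, Real.norm_eq_abs, abs_div, Nat.abs_cast]
        rcases Nat.eq_zero_or_pos n with h | h
        · simp [h]
        · have hnpos : (0:ℝ) < n := by exact_mod_cast h
          gcongr
          calc |x 0 - x n| ≤ |x 0| + |x n| := abs_sub _ _
            _ ≤ 2 * ‖x‖ := by
              have h3 := linf_apply_abs_le_norm x 0
              have h4 := linf_apply_abs_le_norm x n
              linarith
      exact squeeze_zero_norm hb (tendsto_const_div_atTop_nhds_zero_nat (2 * ‖x‖))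
    have h2 : Tendsto (cesaro (fun k => x (k+1) - T x k)) atTop (nhds 0) := by
      refine tendsto_cesaro_zero (M := ‖x‖ + ‖T x‖ + 1) (by positivity) ?_ ?_
      · intro k
        have h3 := linf_apply_abs_le_norm x (k+1)
        have h4 := linf_apply_abs_le_norm (T x) k
        calc |x (k+1) - T x k| ≤ |x (k+1)| + |T x k| := abs_sub _ _
          _ ≤ ‖x‖ + ‖T x‖ + 1 := by linarith
      · intro ε hε
        refine hasDensity_zero_mono ?_ (hT x)
        intro k hk
        simp only [Set.mem_setOf_eq] at hk ⊢
        intro hEq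
        rw [hEq] at hk
        simp only [sub_self, abs_zero] at hk
        linarith
    have hy : g (x - T x) = 0 := by
      apply key _ 0
      have hco : (⇑(x - T x) : ℕ → ℝ)
          = fun k => (x k - x (k+1)) + (x (k+1) - T x k) := by
        funext k
        have h5 : (x - T x) k = x k - T x k := by simp
        rw [h5]; ring
      rw [hco, cesaro_add]
      have h3 := h1.add h2
      rw [add_zero] at h3
      exact h3
    rw [hFx, hFx, ← sub_eq_zero, ← map_sub]
    exact hy

end HahnBanach
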